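/- Let P be the standard parabolic of GL_{n+1} with block sizes μ_1 ≥ μ_2 ≥ ... ≥ μ_ℓ. Then the generic Jordan type of a matrix in the nilradical n_P of Lie(P) is the dual partition μ*, where μ*_j = #{i : μ_i ≥ j}. In particular the nilpotent orbit associated to n_P is O_{μ*}. -/

import Mathlib

/-- Partial sums `B i = μ_0 + ⋯ + μ_{i-1}` of the block sizes: the block boundaries. -/
def blockBoundary (mu : ℕ → ℕ) (i : ℕ) : ℕ := ∑ k ∈ Finset.range i, mu k

/-- The nilradical `n_P` of the standard parabolic of `GL_{n+1}` with block sizes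
`μ_0, μ_1, …` (in order): the block strictly upper triangular matrices.  A matrix
`x` lies in `n_P` iff `x r c = 0` whenever the column `c` does not lie strictly to
the right of the diagonal block containing row `r`. -/
def blockNilrad (n : ℕ) (mu : ℕ → ℕ) :
    Set (Matrix (Fin (n + 1)) (Fin (n + 1)) ℂ) :=
  {x | ∀ r c : Fin (n + 1), ∀ i : ℕ,
    blockBoundary mu i ≤ (r : ℕ) → (c : ℕ) < blockBoundary mu (i + 1) → x r c = 0}

/-- The dual partition `μ*`, with `μ*_j = #{i : μ_i ≥ j}` (here `dualPart mu ℓ j`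
is `μ*_{j+1}`, `0`-indexed, for a partition supported on `{0, …, ℓ-1}`). -/
def dualPart (mu : ℕ → ℕ) (ℓ : ℕ) (j : ℕ) : ℕ :=
  ((Finset.range ℓ).filter (fun i => j + 1 ≤ mu i)).card

namespace GJTaux

/-- block index of position `m` -/
def blk (mu : ℕ → ℕ) (ℓ m : ℕ) : ℕ :=
  Nat.findGreatest (fun j => blockBoundary mu j ≤ m) ℓ

variable {n ℓ : ℕ} {mu : ℕ → ℕ}

lemma B_zero : blockBoundary mu 0 = 0 := rfl

lemma B_succ (i : ℕ) : blockBoundary mu (i + 1) = blockBoundary mu i + mu i :=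
  Finset.sum_range_succ _ _

lemma B_mono {i j : ℕ} (h : i ≤ j) : blockBoundary mu i ≤ blockBoundary mu j :=
  Finset.sum_le_sum_of_subset (Finset.range_subset_range.2 h)

section hyps
variable (hzero : ∀ i, ℓ ≤ i → mu i = 0)
  (hsum : ∑ i ∈ Finset.range ℓ, mu i = n + 1)

include hzero hsum in
lemma B_of_le {k : ℕ} (h : ℓ ≤ k) : blockBoundary mu k = n + 1 := by
  rw [blockBoundary, ← Finset.sum_subset (Finset.range_subset_range.2 h)
    (fun x hx hnx => hzero x (by simpa using hnx))]
  exact hsum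

include hzero hsum in
lemma B_le (k : ℕ) : blockBoundary mu k ≤ n + 1 := by
  rcases le_or_gt k ℓ with h | h
  · exact le_of_le_of_eq (B_mono h) hsum
  · exact (B_of_le hzero hsum h.le).le

lemma B_blk_le (m : ℕ) : blockBoundary mu (blk mu ℓ m) ≤ m :=
  Nat.findGreatest_spec (P := fun j => blockBoundary mu j ≤ m) (Nat.zero_le ℓ) (by simp [blockBoundary])

lemma blk_le (m : ℕ) : blk mu ℓ m ≤ ℓ := Nat.findGreatest_le ℓ

include hzero hsum in
lemma blk_lt {m : ℕ} (hm : m ≤ n) : blk mu ℓ m < ℓ := by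
  rcases lt_or_ge (blk mu ℓ m) ℓ with h | h
  · exact h
  · have := B_blk_le (mu := mu) (ℓ := ℓ) m
    rw [B_of_le hzero hsum h] at this
    omega

include hzero hsum in
lemma lt_B_blk_succ {m : ℕ} (hm : m ≤ n) : m < blockBoundary mu (blk mu ℓ m + 1) := by
  by_contra hcon
  push_neg at hcon
  have h1 : blk mu ℓ m + 1 ≤ ℓ := blk_lt hzero hsum hm
  exact Nat.findGreatest_is_greatest (P := fun j => blockBoundary mu j ≤ m) (Nat.lt_succ_self _) h1 hcon

include hzero hsum in
lemma blk_eq {m j : ℕ} (hm : m ≤ n) (h1 : blockBoundary mu j ≤ m)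
    (h2 : m < blockBoundary mu (j + 1)) : blk mu ℓ m = j := by
  have hjl : j ≤ ℓ := by
    by_contra hc
    push_neg at hc
    have := B_of_le hzero hsum hc.le
    omega
  have hge : j ≤ blk mu ℓ m := Nat.le_findGreatest (P := fun j => blockBoundary mu j ≤ m) hjl h1
  rcases lt_or_ge j (blk mu ℓ m) with h | h
  · have : blockBoundary mu (j + 1) ≤ blockBoundary mu (blk mu ℓ m) := B_mono h
    have := B_blk_le (mu := mu) (ℓ := ℓ) m
    omega
  · omega

include hzero hsum in
lemma blk_ge_iff {m k : ℕ} (hm : m ≤ n) : k ≤ blk mu ℓ m ↔ blockBoundary mu k ≤ m := by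
  constructor
  · intro h
    exact le_trans (B_mono h) (B_blk_le m)
  · intro h
    have hkl : k ≤ ℓ := by
      by_contra hc
      push_neg at hc
      have := B_of_le hzero hsum hc.le
      omega
    exact Nat.le_findGreatest (P := fun j => blockBoundary mu j ≤ m) hkl h

end hyps

end GJTaux

namespace GJTaux

variable {n ℓ : ℕ} {mu : ℕ → ℕ}

lemma filter_eq_range (hmono : ∀ i j : ℕ, i ≤ j → mu j ≤ mu i) (j : ℕ) :
    (Finset.range ℓ).filter (fun i => j + 1 ≤ mu i) = Finset.range (dualPart mu ℓ j) := by
  set S := (Finset.range ℓ).filter (fun i => j + 1 ≤ mu i) with hS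
  have hdc : ∀ a b : ℕ, b ∈ S → a ≤ b → a ∈ S := by
    intro a b hb hab
    simp only [hS, Finset.mem_filter, Finset.mem_range] at hb ⊢
    exact ⟨lt_of_le_of_lt hab hb.1, le_trans hb.2 (hmono a b hab)⟩
  ext a
  simp only [Finset.mem_range, dualPart, ← hS]
  constructor
  · intro ha
    have hsub : Finset.range (a + 1) ⊆ S := fun b hb =>
      hdc b a ha (Nat.lt_succ_iff.mp (Finset.mem_range.mp hb))
    have := Finset.card_le_card hsub
    simpa using this
  · intro ha
    by_contra hna
    have hsub : S ⊆ Finset.range a := by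
      intro b hb
      rw [Finset.mem_range]
      by_contra hba
      exact hna (hdc a b hb (le_of_not_gt hba))
    have := Finset.card_le_card hsub
    simp only [Finset.card_range] at this
    omega

lemma sum_dual (hzero : ∀ i, ℓ ≤ i → mu i = 0)
    (hsum : ∑ i ∈ Finset.range ℓ, mu i = n + 1)
    (hmono : ∀ i j : ℕ, i ≤ j → mu j ≤ mu i) (k : ℕ) :
    ∑ j ∈ Finset.range (n + 1), (dualPart mu ℓ j - k) = (n + 1) - blockBoundary mu k := by
  have hmu_le : ∀ i, mu i ≤ n + 1 := by
    intro i
    rcases lt_or_ge i ℓ with h | h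
    · calc mu i ≤ ∑ i ∈ Finset.range ℓ, mu i :=
          Finset.single_le_sum (fun _ _ => Nat.zero_le _) (Finset.mem_range.2 h)
        _ = n + 1 := hsum
    · simp [hzero i h]
  have step1 : ∀ j, dualPart mu ℓ j - k
      = ((Finset.range ℓ).filter (fun i => (j + 1 ≤ mu i) ∧ k ≤ i)).card := by
    intro j
    rw [← Finset.filter_filter, filter_eq_range hmono j]
    have h2 : (Finset.range (dualPart mu ℓ j)).filter (fun i => k ≤ i)
        = Finset.Ico k (dualPart mu ℓ j) := by
      ext a
      simp only [Finset.mem_filter, Finset.mem_range, Finset.mem_Ico]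
      omega
    rw [h2, Nat.card_Ico]
  have hsplit : ∑ i ∈ Finset.range ℓ, (if k ≤ i then mu i else 0) + blockBoundary mu k
      = n + 1 := by
    rcases le_or_gt k ℓ with h | h
    · have h3 : ∑ i ∈ Finset.range ℓ, (if k ≤ i then 0 else mu i) = blockBoundary mu k := by
        have e1 : ∀ i : ℕ, (if k ≤ i then 0 else mu i) = (if ¬ k ≤ i then mu i else 0) := by
          intro i; by_cases hk : k ≤ i <;> simp [hk]
        have e2 : ((Finset.range ℓ).filter (fun i => ¬ k ≤ i)) = Finset.range k := by
          ext a
          simp only [Finset.mem_filter, Finset.mem_range, not_le]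
          omega
        simp only [e1]
        rw [← Finset.sum_filter, e2]
        rfl
      have h2 : ∑ i ∈ Finset.range ℓ, (if k ≤ i then mu i else 0)
          + ∑ i ∈ Finset.range ℓ, (if k ≤ i then 0 else mu i) = n + 1 := by
        rw [← Finset.sum_add_distrib, ← hsum]
        refine Finset.sum_congr rfl fun i _ => ?_
        by_cases hk : k ≤ i <;> simp [hk]
      omega
    · have h2 : ∑ i ∈ Finset.range ℓ, (if k ≤ i then mu i else 0) = 0 := by
        refine Finset.sum_eq_zero fun i hi => ?_
        rw [Finset.mem_range] at hi
        have : ¬ k ≤ i := by omega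
        simp [this]
      rw [h2, B_of_le hzero hsum h.le]
      omega
  calc ∑ j ∈ Finset.range (n + 1), (dualPart mu ℓ j - k)
      = ∑ j ∈ Finset.range (n + 1), ∑ i ∈ Finset.range ℓ,
          (if (j + 1 ≤ mu i) ∧ k ≤ i then 1 else 0) := by
        refine Finset.sum_congr rfl fun j _ => ?_
        rw [step1 j, Finset.card_filter]
    _ = ∑ i ∈ Finset.range ℓ, ∑ j ∈ Finset.range (n + 1),
          (if (j + 1 ≤ mu i) ∧ k ≤ i then 1 else 0) := Finset.sum_comm
    _ = ∑ i ∈ Finset.range ℓ, (if k ≤ i then mu i else 0) := by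
        refine Finset.sum_congr rfl fun i _ => ?_
        by_cases hk : k ≤ i
        · simp only [hk, and_true]
          have e3 : (Finset.range (n + 1)).filter (fun j => j + 1 ≤ mu i)
              = Finset.range (mu i) := by
            ext a
            have := hmu_le i
            simp only [Finset.mem_filter, Finset.mem_range]
            omega
          rw [← Finset.card_filter, e3, Finset.card_range]
          simp
        · simp [hk]
    _ = (n + 1) - blockBoundary mu k := by omega
end GJTaux
namespace GJTaux

lemma pow_entry {n : ℕ} {mu : ℕ → ℕ} {x : Matrix (Fin (n + 1)) (Fin (n + 1)) ℂ}
    (hx : x ∈ blockNilrad n mu) :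
    ∀ (k i : ℕ) (r c : Fin (n + 1)), blockBoundary mu i ≤ (r : ℕ) →
      (c : ℕ) < blockBoundary mu (i + k) → (x ^ k) r c = 0 := by
  intro k
  induction k with
  | zero =>
    intro i r c hr hc
    simp only [Nat.add_zero] at hc
    rw [pow_zero]
    exact Matrix.one_apply_ne (by intro h; rw [h] at hr; omega)
  | succ k ih =>
    intro i r c hr hc
    rw [pow_succ, Matrix.mul_apply]
    refine Finset.sum_eq_zero fun m _ => ?_
    by_cases hm : (m : ℕ) < blockBoundary mu (i + k)
    · rw [ih i r m hr hm, zero_mul]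
    · rw [hx m c (i + k) (not_lt.1 hm) (by rw [Nat.add_assoc]; exact hc), mul_zero]

lemma rank_le_of_cols_zero {N b : ℕ} (A : Matrix (Fin N) (Fin N) ℂ)
    (h : ∀ (r c : Fin N), (c : ℕ) < b → A r c = 0) : A.rank ≤ N - b := by
  rw [Matrix.rank_eq_finrank_span_cols]
  classical
  set T : Finset (Fin N) := Finset.univ.filter (fun c => b ≤ (c : ℕ)) with hT
  set Timg : Finset (Fin N → ℂ) := T.image (fun c => A.transpose c) with hTimg
  have hsub : Set.range A.transpose ⊆ insert 0 (Timg : Set (Fin N → ℂ)) := by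
    rintro v ⟨c, rfl⟩
    by_cases hc : b ≤ (c : ℕ)
    · refine Set.mem_insert_of_mem _ ?_
      simp only [hTimg, Finset.coe_image, Set.mem_image, Finset.mem_coe]
      exact ⟨c, by simp [hT, hc], rfl⟩
    · refine Set.mem_insert_iff.2 (Or.inl ?_)
      funext r
      rw [Matrix.transpose_apply]
      exact h r c (not_le.1 hc)
  have h1 : Submodule.span ℂ (Set.range A.transpose) ≤ Submodule.span ℂ (Timg : Set (Fin N → ℂ)) :=
    le_trans (Submodule.span_mono hsub) (le_of_eq Submodule.span_insert_zero)
  have h2 := Submodule.finrank_mono h1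
  refine le_trans h2 (le_trans (finrank_span_finset_le_card Timg) ?_)
  refine le_trans Finset.card_image_le ?_
  have hcard : T.card = ∑ j ∈ Finset.range N, (if b ≤ j then 1 else 0) := by
    rw [hT, Finset.card_filter]
    exact Fin.sum_univ_eq_sum_range (fun j => if b ≤ j then 1 else 0) N
  rw [hcard, ← Finset.card_filter]
  have e : (Finset.range N).filter (fun j => b ≤ j) = Finset.Ico b N := by
    ext a
    simp only [Finset.mem_filter, Finset.mem_range, Finset.mem_Ico]
    omega
  rw [e, Nat.card_Ico]

end GJTaux
namespace GJTaux

noncomputable def X (n ℓ : ℕ) (mu : ℕ → ℕ) : Matrix (Fin (n + 1)) (Fin (n + 1)) ℂ :=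
  fun r c =>
    if 1 ≤ blk mu ℓ (c : ℕ) ∧
        (r : ℕ) = blockBoundary mu (blk mu ℓ (c : ℕ) - 1)
          + ((c : ℕ) - blockBoundary mu (blk mu ℓ (c : ℕ)))
    then 1 else 0

lemma X_apply (n ℓ : ℕ) (mu : ℕ → ℕ) (r c : Fin (n + 1)) :
    X n ℓ mu r c =
      if 1 ≤ blk mu ℓ (c : ℕ) ∧
          (r : ℕ) = blockBoundary mu (blk mu ℓ (c : ℕ) - 1)
            + ((c : ℕ) - blockBoundary mu (blk mu ℓ (c : ℕ)))
      then 1 else 0 := rfl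

variable {n ℓ : ℕ} {mu : ℕ → ℕ}

lemma off_lt (hzero : ∀ i, ℓ ≤ i → mu i = 0)
    (hsum : ∑ i ∈ Finset.range ℓ, mu i = n + 1) (c : Fin (n + 1)) :
    (c : ℕ) - blockBoundary mu (blk mu ℓ (c : ℕ)) < mu (blk mu ℓ (c : ℕ)) := by
  have h1 := B_blk_le (mu := mu) (ℓ := ℓ) (c : ℕ)
  have h2 := lt_B_blk_succ hzero hsum (Nat.lt_succ_iff.1 c.isLt)
  rw [B_succ] at h2
  omega

lemma tgt_lt (hzero : ∀ i, ℓ ≤ i → mu i = 0)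
    (hsum : ∑ i ∈ Finset.range ℓ, mu i = n + 1)
    (hmono : ∀ i j : ℕ, i ≤ j → mu j ≤ mu i) (c : Fin (n + 1)) (k : ℕ) :
    blockBoundary mu (blk mu ℓ (c : ℕ) - k)
      + ((c : ℕ) - blockBoundary mu (blk mu ℓ (c : ℕ))) < n + 1 := by
  have hp := off_lt hzero hsum c
  have hmu : mu (blk mu ℓ (c : ℕ)) ≤ mu (blk mu ℓ (c : ℕ) - k) := hmono _ _ (Nat.sub_le _ _)
  have h3 : blockBoundary mu (blk mu ℓ (c : ℕ) - k + 1)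
      = blockBoundary mu (blk mu ℓ (c : ℕ) - k) + mu (blk mu ℓ (c : ℕ) - k) := B_succ _
  have h4 : blockBoundary mu (blk mu ℓ (c : ℕ) - k + 1) ≤ n + 1 := B_le hzero hsum _
  omega

lemma blk_tgt (hzero : ∀ i, ℓ ≤ i → mu i = 0)
    (hsum : ∑ i ∈ Finset.range ℓ, mu i = n + 1)
    (hmono : ∀ i j : ℕ, i ≤ j → mu j ≤ mu i) (c : Fin (n + 1)) (k : ℕ) :
    blk mu ℓ (blockBoundary mu (blk mu ℓ (c : ℕ) - k)
      + ((c : ℕ) - blockBoundary mu (blk mu ℓ (c : ℕ)))) = blk mu ℓ (c : ℕ) - k := by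
  have hp := off_lt hzero hsum c
  have hmu : mu (blk mu ℓ (c : ℕ)) ≤ mu (blk mu ℓ (c : ℕ) - k) := hmono _ _ (Nat.sub_le _ _)
  have h4 := tgt_lt hzero hsum hmono c k
  refine blk_eq hzero hsum (by omega) (Nat.le_add_right _ _) ?_
  rw [B_succ]
  omega

lemma X_mem (hzero : ∀ i, ℓ ≤ i → mu i = 0)
    (hsum : ∑ i ∈ Finset.range ℓ, mu i = n + 1)
    (hmono : ∀ i j : ℕ, i ≤ j → mu j ≤ mu i) :
    X n ℓ mu ∈ blockNilrad n mu := by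
  intro r c i hr hc
  rw [X_apply, if_neg]
  rintro ⟨h1, h2⟩
  have hble : blockBoundary mu (blk mu ℓ (c : ℕ)) ≤ (c : ℕ) := B_blk_le _
  have hji : blk mu ℓ (c : ℕ) ≤ i := by
    by_contra hcon
    push_neg at hcon
    have := B_mono (mu := mu) (show i + 1 ≤ blk mu ℓ (c : ℕ) from hcon)
    omega
  have hp := off_lt hzero hsum c
  have hmu2 : mu (blk mu ℓ (c : ℕ)) ≤ mu (blk mu ℓ (c : ℕ) - 1) := hmono _ _ (Nat.sub_le _ _)
  have hBj : blockBoundary mu (blk mu ℓ (c : ℕ) - 1 + 1)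
      = blockBoundary mu (blk mu ℓ (c : ℕ) - 1) + mu (blk mu ℓ (c : ℕ) - 1) := B_succ _
  have heq : blockBoundary mu (blk mu ℓ (c : ℕ) - 1 + 1) ≤ blockBoundary mu (blk mu ℓ (c : ℕ)) :=
    B_mono (by omega)
  have hBij : blockBoundary mu (blk mu ℓ (c : ℕ)) ≤ blockBoundary mu i := B_mono hji
  omega

lemma X_pow (hzero : ∀ i, ℓ ≤ i → mu i = 0)
    (hsum : ∑ i ∈ Finset.range ℓ, mu i = n + 1)
    (hmono : ∀ i j : ℕ, i ≤ j → mu j ≤ mu i) (k : ℕ) (r c : Fin (n + 1)) :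
    (X n ℓ mu ^ k) r c =
      if k ≤ blk mu ℓ (c : ℕ) ∧
          (r : ℕ) = blockBoundary mu (blk mu ℓ (c : ℕ) - k)
            + ((c : ℕ) - blockBoundary mu (blk mu ℓ (c : ℕ)))
      then 1 else 0 := by
  induction k generalizing r with
  | zero =>
    have hB := B_blk_le (mu := mu) (ℓ := ℓ) (c : ℕ)
    rw [pow_zero, Matrix.one_apply]
    by_cases h : r = c
    · subst h
      rw [if_pos rfl, if_pos ⟨Nat.zero_le _, by rw [Nat.sub_zero]; omega⟩]
    · rw [if_neg h, if_neg]
      rintro ⟨-, h2⟩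
      rw [Nat.sub_zero] at h2
      exact h (Fin.ext (by omega))
  | succ k ih =>
    rw [pow_succ', Matrix.mul_apply]
    by_cases hk : k ≤ blk mu ℓ (c : ℕ)
    · set m0 : Fin (n + 1) :=
        ⟨blockBoundary mu (blk mu ℓ (c : ℕ) - k)
          + ((c : ℕ) - blockBoundary mu (blk mu ℓ (c : ℕ))), tgt_lt hzero hsum hmono c k⟩
        with hm0
      have hcol : ∀ m : Fin (n + 1), (X n ℓ mu ^ k) m c = if m = m0 then 1 else 0 := by
        intro m
        rw [ih]
        by_cases hm : m = m0
        · subst hm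
          rw [if_pos rfl, if_pos ⟨hk, rfl⟩]
        · rw [if_neg hm, if_neg]
          rintro ⟨-, h2⟩
          exact hm (Fin.ext h2)
      simp only [hcol, mul_ite, mul_one, mul_zero, Finset.sum_ite_eq', Finset.mem_univ, if_true]
      have hbm : blk mu ℓ (m0 : ℕ) = blk mu ℓ (c : ℕ) - k := blk_tgt hzero hsum hmono c k
      have hval : (m0 : ℕ) = blockBoundary mu (blk mu ℓ (c : ℕ) - k)
          + ((c : ℕ) - blockBoundary mu (blk mu ℓ (c : ℕ))) := rfl
      have hBle : blockBoundary mu (blk mu ℓ (c : ℕ)) ≤ (c : ℕ) := B_blk_le _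
      rw [X_apply]
      by_cases hC : (k + 1 ≤ blk mu ℓ (c : ℕ)) ∧
          (r : ℕ) = blockBoundary mu (blk mu ℓ (c : ℕ) - (k + 1))
            + ((c : ℕ) - blockBoundary mu (blk mu ℓ (c : ℕ))) 
      · rw [if_pos hC, if_pos]
        refine ⟨by rw [hbm]; omega, ?_⟩
        rw [hbm, hval]
        have e1 : blockBoundary mu (blk mu ℓ (c : ℕ) - k)
            + ((c : ℕ) - blockBoundary mu (blk mu ℓ (c : ℕ)))
            - blockBoundary mu (blk mu ℓ (c : ℕ) - k)
            = (c : ℕ) - blockBoundary mu (blk mu ℓ (c : ℕ)) := by omega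
        rw [e1]
        have e2 : blk mu ℓ (c : ℕ) - k - 1 = blk mu ℓ (c : ℕ) - (k + 1) := by omega
        rw [e2]
        exact hC.2
      · rw [if_neg hC, if_neg]
        rintro ⟨h1, h2⟩
        rw [hbm] at h1 h2
        rw [hval] at h2
        have e1 : blockBoundary mu (blk mu ℓ (c : ℕ) - k)
            + ((c : ℕ) - blockBoundary mu (blk mu ℓ (c : ℕ)))
            - blockBoundary mu (blk mu ℓ (c : ℕ) - k)
            = (c : ℕ) - blockBoundary mu (blk mu ℓ (c : ℕ)) := by omega
        have e2 : blk mu ℓ (c : ℕ) - k - 1 = blk mu ℓ (c : ℕ) - (k + 1) := by omega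
        rw [e1, e2] at h2
        exact hC ⟨by omega, h2⟩
    · have hcol0 : ∀ m : Fin (n + 1), (X n ℓ mu ^ k) m c = 0 := by
        intro m
        rw [ih, if_neg]
        rintro ⟨h1, -⟩
        exact hk h1
      simp only [hcol0, mul_zero, Finset.sum_const_zero]
      rw [if_neg]
      rintro ⟨h1, -⟩
      exact hk (by omega)

end GJTaux
namespace GJTaux
variable {n ℓ : ℕ} {mu : ℕ → ℕ}

lemma X_rank (hzero : ∀ i, ℓ ≤ i → mu i = 0)
    (hsum : ∑ i ∈ Finset.range ℓ, mu i = n + 1)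
    (hmono : ∀ i j : ℕ, i ≤ j → mu j ≤ mu i) (k : ℕ) :
    (X n ℓ mu ^ k).rank = (n + 1) - blockBoundary mu k := by
  classical
  apply le_antisymm
  · apply rank_le_of_cols_zero
    intro r c hc
    rw [X_pow hzero hsum hmono, if_neg]
    rintro ⟨h1, -⟩
    have := (blk_ge_iff hzero hsum (Nat.lt_succ_iff.1 c.isLt)).1 h1
    omega
  · set S : Finset (Fin (n + 1)) := Finset.univ.filter (fun c => k ≤ blk mu ℓ (c : ℕ)) with hS
    set t : Fin (n + 1) → Fin (n + 1) := fun c =>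
      ⟨blockBoundary mu (blk mu ℓ (c : ℕ) - k) + ((c : ℕ) - blockBoundary mu (blk mu ℓ (c : ℕ))),
        tgt_lt hzero hsum hmono c k⟩ with ht
    have hinj : ∀ c ∈ S, ∀ c' ∈ S, t c = t c' → c = c' := by
      intro c hc c' hc' h
      rw [hS, Finset.mem_filter] at hc hc'
      have hv : ((t c : Fin (n + 1)) : ℕ) = ((t c' : Fin (n + 1)) : ℕ) := congrArg Fin.val h
      have h1 := blk_tgt hzero hsum hmono c k
      have h2 := blk_tgt hzero hsum hmono c' k
      have hb : blk mu ℓ (c : ℕ) - k = blk mu ℓ (c' : ℕ) - k :=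
        h1.symm.trans ((congrArg (blk mu ℓ) hv).trans h2)
      have hbc : blk mu ℓ (c : ℕ) = blk mu ℓ (c' : ℕ) := by
        have := hc.2
        have := hc'.2
        omega
      have hB := B_blk_le (mu := mu) (ℓ := ℓ) (c : ℕ)
      have hB' := B_blk_le (mu := mu) (ℓ := ℓ) (c' : ℕ)
      have hvv : blockBoundary mu (blk mu ℓ (c : ℕ) - k)
            + ((c : ℕ) - blockBoundary mu (blk mu ℓ (c : ℕ)))
          = blockBoundary mu (blk mu ℓ (c' : ℕ) - k)
            + ((c' : ℕ) - blockBoundary mu (blk mu ℓ (c' : ℕ))) := hv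
      rw [hbc] at hvv hB
      exact Fin.ext (by omega)
    have hli : LinearIndependent ℂ (fun s : {c // c ∈ S} => (Pi.single (t s.1) 1 : Fin (n + 1) → ℂ)) := by
      have hbase := (Pi.basisFun ℂ (Fin (n + 1))).linearIndependent
      have hcomp : (fun s : {c // c ∈ S} => (Pi.single (t s.1) 1 : Fin (n + 1) → ℂ))
          = (Pi.basisFun ℂ (Fin (n + 1))) ∘ (fun s : {c // c ∈ S} => t s.1) := by
        funext s
        simp [Pi.basisFun_apply]
      rw [hcomp]
      exact hbase.comp _ (fun s s' hss => Subtype.ext (hinj _ s.2 _ s'.2 hss))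
    have hspan : Submodule.span ℂ
          (Set.range (fun s : {c // c ∈ S} => (Pi.single (t s.1) 1 : Fin (n + 1) → ℂ)))
        ≤ LinearMap.range (Matrix.mulVecLin (X n ℓ mu ^ k)) := by
      rw [Submodule.span_le]
      rintro v ⟨s, rfl⟩
      refine ⟨Pi.single s.1 (1 : ℂ), ?_⟩
      have hsk : k ≤ blk mu ℓ ((s.1 : Fin (n + 1)) : ℕ) := (Finset.mem_filter.mp s.2).2
      have hmv : (Matrix.mulVecLin (X n ℓ mu ^ k)) (Pi.single s.1 (1 : ℂ))
          = fun r => (X n ℓ mu ^ k) r s.1 * 1 := by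
        rw [Matrix.mulVecLin_apply, Matrix.mulVec_single]
        funext r
        simp
      rw [hmv]
      funext r
      rw [mul_one, X_pow hzero hsum hmono]
      simp only [Pi.single_apply]
      by_cases h : r = t s.1
      · rw [if_pos h, if_pos ⟨hsk, congrArg Fin.val h⟩]
      · rw [if_neg h, if_neg]
        rintro ⟨-, h2⟩
        exact h (Fin.ext h2)
    have hfin : Module.finrank ℂ (Submodule.span ℂ
          (Set.range (fun s : {c // c ∈ S} => (Pi.single (t s.1) 1 : Fin (n + 1) → ℂ)))) = S.card := by
      rw [finrank_span_eq_card hli, Fintype.card_coe]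
    have hmono2 := Submodule.finrank_mono hspan
    rw [hfin] at hmono2
    have hrank : (X n ℓ mu ^ k).rank
        = Module.finrank ℂ (LinearMap.range (Matrix.mulVecLin (X n ℓ mu ^ k))) := rfl
    rw [hrank]
    refine le_trans (le_of_eq ?_) hmono2
    have hcard : S.card = ∑ j ∈ Finset.range (n + 1), (if k ≤ blk mu ℓ j then 1 else 0) := by
      rw [hS, Finset.card_filter]
      exact Fin.sum_univ_eq_sum_range (fun j => if k ≤ blk mu ℓ j then 1 else 0) (n + 1)
    have hcong : ∑ j ∈ Finset.range (n + 1), (if k ≤ blk mu ℓ j then 1 else 0)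
        = ∑ j ∈ Finset.range (n + 1), (if blockBoundary mu k ≤ j then 1 else 0) := by
      refine Finset.sum_congr rfl fun j hj => ?_
      rw [Finset.mem_range] at hj
      have := blk_ge_iff (m := j) (k := k) hzero hsum (by omega)
      by_cases h : blockBoundary mu k ≤ j
      · rw [if_pos (this.2 h), if_pos h]
      · rw [if_neg (fun hh => h (this.1 hh)), if_neg h]
    rw [hcard, hcong, ← Finset.card_filter]
    have e : (Finset.range (n + 1)).filter (fun j => blockBoundary mu k ≤ j)
        = Finset.Ico (blockBoundary mu k) (n + 1) := by
      ext a
      simp only [Finset.mem_filter, Finset.mem_range, Finset.mem_Ico]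
      omega
    rw [e, Nat.card_Ico]

end GJTaux

/-- Let `P` be the standard parabolic of `GL_{n+1}` with block sizes
`μ_1 ≥ μ_2 ≥ ⋯ ≥ μ_ℓ` (a partition of `n+1`).  Then the generic Jordan type of a
matrix in the nilradical `n_P` is the dual partition `μ*`: every `x ∈ n_P` satisfies
`rank (x^k) ≤ Σ_j max(μ*_j - k, 0)` for all `k`, and some `x ∈ n_P` attains these
ranks — i.e. `μ*` is the dominance-maximal Jordan type on `n_P`, so the nilpotent
orbit associated to `n_P` is `O_{μ*}`. -/
theorem generic_jordan_type_of_parabolic_nilradical (n ℓ : ℕ) (mu : ℕ → ℕ)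
    (hpos : ∀ i < ℓ, 0 < mu i) (hzero : ∀ i, ℓ ≤ i → mu i = 0)
    (hmono : ∀ i j : ℕ, i ≤ j → mu j ≤ mu i)
    (hsum : ∑ i ∈ Finset.range ℓ, mu i = n + 1) :
    (∀ x ∈ blockNilrad n mu, ∀ k : ℕ,
        (x ^ k).rank ≤ ∑ j ∈ Finset.range (n + 1), (dualPart mu ℓ j - k)) ∧
    (∃ x ∈ blockNilrad n mu, ∀ k : ℕ,
        (x ^ k).rank = ∑ j ∈ Finset.range (n + 1), (dualPart mu ℓ j - k)) := by
  constructor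
  · intro x hx k
    rw [GJTaux.sum_dual hzero hsum hmono k]
    refine GJTaux.rank_le_of_cols_zero _ fun r c hc => ?_
    exact GJTaux.pow_entry hx k 0 r c (Nat.zero_le _) (by simpa using hc)
  · refine ⟨GJTaux.X n ℓ mu, GJTaux.X_mem hzero hsum hmono, fun k => ?_⟩
    rw [GJTaux.sum_dual hzero hsum hmono k]
    exact GJTaux.X_rank hzero hsum hmono k
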